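/- Let P be the smallest collection of unordered pairs of angles in ℝ/ℤ containing {1/3, 2/3} and closed under {s, t} ↦ {s/2, t/2 + 1/2} and {s, t} ↦ {s/2 + 1/2, t/2}. Then every basilica angle t belongs to exactly one pair of P; i.e., there is a unique t̃ ≠ t such that {t, t̃} ∈ P. -/

import Mathlib

/-- Halving using the canonical representative in `[0,1)`. -/
noncomputable def half (t : UnitAddCircle) : UnitAddCircle :=
  ((((AddCircle.equivIco 1 0) t : ℝ) / 2 : ℝ) : UnitAddCircle)

/-- `basPair s t` means the unordered pair `{s, t}` belongs to the smallest collection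
of unordered pairs of angles containing `{1/3, 2/3}` and closed under
`{s, t} ↦ {s/2, t/2 + 1/2}` and `{s, t} ↦ {s/2 + 1/2, t/2}`
(the leaves of the basilica lamination). -/
inductive basPair : UnitAddCircle → UnitAddCircle → Prop
  | base : basPair ((1 / 3 : ℝ) : UnitAddCircle) ((2 / 3 : ℝ) : UnitAddCircle)
  | symm {s t : UnitAddCircle} : basPair s t → basPair t s
  | op1 {s t : UnitAddCircle} : basPair s t →
      basPair (half s) (half t + ((1 / 2 : ℝ) : UnitAddCircle))
  | op2 {s t : UnitAddCircle} : basPair s t →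
      basPair (half s + ((1 / 2 : ℝ) : UnitAddCircle)) (half t)

noncomputable def rep (t : UnitAddCircle) : ℝ := (AddCircle.equivIco 1 0 t : ℝ)

lemma coe_rep (t : UnitAddCircle) : ((rep t : ℝ) : UnitAddCircle) = t :=
  (AddCircle.equivIco 1 0).symm_apply_apply t

lemma rep_mem (t : UnitAddCircle) : rep t ∈ Set.Ico (0 : ℝ) 1 := by
  simpa [rep] using (AddCircle.equivIco 1 0 t).2

lemma rep_coe {x : ℝ} (hx : x ∈ Set.Ico (0 : ℝ) 1) :
    rep ((x : ℝ) : UnitAddCircle) = x := by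
  have h := coe_rep ((x : ℝ) : UnitAddCircle)
  have hm := rep_mem ((x : ℝ) : UnitAddCircle)
  rwa [AddCircle.coe_eq_coe_iff_of_mem_Ico (p := 1) (a := 0) (by simpa using hm)
    (by simpa using hx)] at h

lemma half_eq (t : UnitAddCircle) : half t = ((rep t / 2 : ℝ) : UnitAddCircle) := rfl

lemma rep_ne_zero {t : UnitAddCircle} (ht : t ≠ 0) : rep t ≠ 0 := by
  intro h
  apply ht
  have := coe_rep t
  rw [h] at this
  simpa using this.symm

lemma rep_neg {t : UnitAddCircle} (ht : t ≠ 0) : rep (-t) = 1 - rep t := by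
  have h0 := rep_mem t
  have hne := rep_ne_zero ht
  have h1 : ((1 - rep t : ℝ) : UnitAddCircle) = -t := by
    rw [show (1 - rep t : ℝ) = -rep t + 1 by ring, AddCircle.coe_add_period,
      AddCircle.coe_neg, coe_rep]
  rw [← h1]
  exact rep_coe ⟨by linarith [h0.2], by have := h0.1; cases lt_or_eq_of_le this with
    | inl h => linarith
    | inr h => exact absurd h.symm hne⟩

lemma half_add_half (t : UnitAddCircle) : half t + half t = t := by
  rw [half_eq, ← AddCircle.coe_add, show (rep t / 2 + rep t / 2 : ℝ) = rep t by ring, coe_rep]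

lemma two_nsmul_half (t : UnitAddCircle) : (2 : ℕ) • half t = t := by
  rw [two_smul]; exact half_add_half t

lemma neg_half {t : UnitAddCircle} (ht : t ≠ 0) :
    half (-t) = -half t + ((1 / 2 : ℝ) : UnitAddCircle) := by
  rw [half_eq, half_eq, rep_neg ht,
    show ((1 - rep t) / 2 : ℝ) = -(rep t / 2) + 1 / 2 by ring,
    AddCircle.coe_add, AddCircle.coe_neg]

lemma coe_half_add_coe_half :
    ((1 / 2 : ℝ) : UnitAddCircle) + ((1 / 2 : ℝ) : UnitAddCircle) = 0 := by
  rw [← AddCircle.coe_add]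
  norm_num

lemma neg_half' {t : UnitAddCircle} (ht : t ≠ 0) :
    half (-t) + ((1 / 2 : ℝ) : UnitAddCircle) = -half t := by
  rw [neg_half ht, add_assoc, coe_half_add_coe_half, add_zero]

lemma neg_coe_half : -((1 / 2 : ℝ) : UnitAddCircle) = ((1 / 2 : ℝ) : UnitAddCircle) := by
  rw [eq_comm, eq_neg_iff_add_eq_zero, coe_half_add_coe_half]

lemma third_ne_zero : ((1 / 3 : ℝ) : UnitAddCircle) ≠ 0 := by
  rw [Ne, AddCircle.coe_eq_zero_iff]
  rintro ⟨n, hn⟩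
  rw [zsmul_eq_mul, mul_one] at hn
  have : (3 * n : ℤ) = 1 := by exact_mod_cast (by linarith : (3 * (n : ℝ)) = 1)
  omega

lemma two_thirds_ne_zero : ((2 / 3 : ℝ) : UnitAddCircle) ≠ 0 := by
  rw [Ne, AddCircle.coe_eq_zero_iff]
  rintro ⟨n, hn⟩
  rw [zsmul_eq_mul, mul_one] at hn
  have : (3 * n : ℤ) = 2 := by exact_mod_cast (by linarith : (3 * (n : ℝ)) = 2)
  omega

lemma neg_third : -((1 / 3 : ℝ) : UnitAddCircle) = ((2 / 3 : ℝ) : UnitAddCircle) := by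
  have h : ((2 / 3 : ℝ) : UnitAddCircle) = ((-(1 / 3) : ℝ) : UnitAddCircle) := by
    rw [show (2 / 3 : ℝ) = -(1 / 3) + 1 by norm_num, AddCircle.coe_add_period]
  rw [h, AddCircle.coe_neg]

lemma neg_two_thirds : -((2 / 3 : ℝ) : UnitAddCircle) = ((1 / 3 : ℝ) : UnitAddCircle) := by
  rw [← neg_third, neg_neg]

/-- The key invariant: the two members of any basilica leaf are negatives of each other,
and each one is a basilica angle (for `1/3` or `2/3`). -/
lemma basPair_invariant {s t : UnitAddCircle} (h : basPair s t) :
    t = -s ∧ ∃ n : ℕ, (2 ^ n : ℕ) • s = ((1 / 3 : ℝ) : UnitAddCircle) ∨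
      (2 ^ n : ℕ) • s = ((2 / 3 : ℝ) : UnitAddCircle) := by
  induction h with
  | base =>
      refine ⟨neg_third.symm, 0, Or.inl ?_⟩
      simp
  | @symm s t h ih =>
      obtain ⟨ht, n, hn⟩ := ih
      subst ht
      refine ⟨(neg_neg s).symm, n, ?_⟩
      rcases hn with hn | hn
      · right; rw [smul_neg, hn, neg_third]
      · left; rw [smul_neg, hn, neg_two_thirds]
  | @op1 s t h ih =>
      obtain ⟨ht, n, hn⟩ := ih
      have hs0 : s ≠ 0 := by
        rintro rfl
        rcases hn with hn | hn
        · exact third_ne_zero (by rw [← hn, smul_zero])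
        · exact two_thirds_ne_zero (by rw [← hn, smul_zero])
      subst ht
      constructor
      · exact (neg_half' hs0)
      · refine ⟨n + 1, ?_⟩
        have key : (2 ^ (n + 1) : ℕ) • half s = (2 ^ n : ℕ) • s := by
          rw [pow_succ, mul_smul, two_nsmul_half]
        rw [key]; exact hn
  | @op2 s t h ih =>
      obtain ⟨ht, n, hn⟩ := ih
      have hs0 : s ≠ 0 := by
        rintro rfl
        rcases hn with hn | hn
        · exact third_ne_zero (by rw [← hn, smul_zero])
        · exact two_thirds_ne_zero (by rw [← hn, smul_zero])
      subst ht
      constructor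
      · rw [neg_half hs0, neg_add, neg_coe_half]
      · refine ⟨n + 1, ?_⟩
        have key : (2 ^ (n + 1) : ℕ) • (half s + ((1 / 2 : ℝ) : UnitAddCircle))
            = (2 ^ n : ℕ) • s := by
          rw [pow_succ, mul_smul]
          congr 1
          rw [smul_add, two_nsmul_half, two_smul, coe_half_add_coe_half, add_zero]
        rw [key]; exact hn

lemma basPair_self_neg : ∀ (n : ℕ) (t : UnitAddCircle),
    (2 ^ n : ℕ) • t = ((1 / 3 : ℝ) : UnitAddCircle) → basPair t (-t) := by
  intro n
  induction n with
  | zero =>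
      intro t ht
      rw [pow_zero, one_smul] at ht
      subst ht
      rw [neg_third]
      exact basPair.base
  | succ n ih =>
      intro t ht
      set s : UnitAddCircle := (2 : ℕ) • t with hsdef
      have hs : (2 ^ n : ℕ) • s = ((1 / 3 : ℝ) : UnitAddCircle) := by
        rw [hsdef, ← mul_smul, ← pow_succ]; exact ht
      have hb := ih s hs
      have hs0 : s ≠ 0 := by
        rintro h
        exact third_ne_zero (by rw [← hs, h, smul_zero])
      have hscoe : s = ((2 * rep t : ℝ) : UnitAddCircle) := by
        rw [hsdef, two_smul, show (2 * rep t : ℝ) = rep t + rep t by ring,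
          AddCircle.coe_add, coe_rep]
      have hmem := rep_mem t
      by_cases hlt : rep t < 1 / 2
      · have hreps : rep s = 2 * rep t := by
          rw [hscoe]; exact rep_coe ⟨by linarith [hmem.1], by linarith⟩
        have hhalf : half s = t := by
          rw [half_eq, hreps, show (2 * rep t / 2 : ℝ) = rep t by ring, coe_rep]
        rw [← hhalf]
        have h1 := basPair.op1 hb
        rwa [neg_half' hs0] at h1
      · have hreps : rep s = 2 * rep t - 1 := by
          have hc : s = ((2 * rep t - 1 : ℝ) : UnitAddCircle) := by
            rw [hscoe, ← AddCircle.coe_add_period 1 (2 * rep t - 1)]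
            congr 1
            ring
          rw [hc]; exact rep_coe ⟨by linarith, by linarith [hmem.2]⟩
        have hhalf : half s + ((1 / 2 : ℝ) : UnitAddCircle) = t := by
          rw [half_eq, hreps, ← AddCircle.coe_add,
            show ((2 * rep t - 1) / 2 + 1 / 2 : ℝ) = rep t by ring, coe_rep]
        rw [← hhalf]
        have h1 := basPair.op2 hb
        have h2 : half (-s) = -(half s + ((1 / 2 : ℝ) : UnitAddCircle)) := by
          rw [neg_half hs0, neg_add, neg_coe_half]
        rwa [h2] at h1

/-- Every basilica angle `t` has a unique partner `t̃ ≠ t` with `{t, t̃}` a leaf of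
the basilica lamination. -/
theorem basilica_angle_unique_partner (t : UnitAddCircle)
    (hbas : ∃ n : ℕ, (2 ^ n : ℕ) • t = ((1 / 3 : ℝ) : UnitAddCircle)) :
    ∃! tt : UnitAddCircle, tt ≠ t ∧ basPair t tt := by
  obtain ⟨n, hn⟩ := hbas
  refine ⟨-t, ⟨?_, basPair_self_neg n t hn⟩, ?_⟩
  · intro h
    have h2 : (2 : ℕ) • t = 0 := by
      rw [two_smul]
      nth_rw 1 [← h]
      exact neg_add_cancel t
    have : ((2 / 3 : ℝ) : UnitAddCircle) = 0 := by
      have : (2 : ℕ) • ((1 / 3 : ℝ) : UnitAddCircle) = 0 := by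
        rw [← hn, ← mul_smul, mul_comm, mul_smul, h2, smul_zero]
      rwa [← AddCircle.coe_nsmul, show ((2 : ℕ) • (1 / 3 : ℝ)) = (2 / 3 : ℝ) by
        norm_num] at this
    exact two_thirds_ne_zero this
  · rintro tt ⟨-, hp⟩
    exact (basPair_invariant hp).1
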